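/- For any real numbers x, y ≥ 0 and parameters p > 0, 0 < q ≤ 1, the function h_{p,q}(x) = log(1 + x^q / p) is subadditive: h_{p,q}(x + y) ≤ h_{p,q}(x) + h_{p,q}(y). -/

import Mathlib

/-- For x, y ≥ 0, p > 0, 0 < q ≤ 1, the function
`h_{p,q}(x) = log(1 + x^q / p)` is subadditive. -/
theorem hpq_subadditive (p q x y : ℝ) (hp : 0 < p) (hq0 : 0 < q) (hq1 : q ≤ 1)
    (hx : 0 ≤ x) (hy : 0 ≤ y) :
    Real.log (1 + (x + y) ^ q / p) ≤
      Real.log (1 + x ^ q / p) + Real.log (1 + y ^ q / p) := by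
  have h1 : (x + y) ^ q ≤ x ^ q + y ^ q :=
    by
      have := NNReal.rpow_add_le_add_rpow ⟨x, hx⟩ ⟨y, hy⟩ hq0.le hq1
      have h2 := NNReal.coe_le_coe.2 this
      exact h2
  have hxq : (0:ℝ) ≤ x ^ q := Real.rpow_nonneg hx q
  have hyq : (0:ℝ) ≤ y ^ q := Real.rpow_nonneg hy q
  have hxp : (0:ℝ) < 1 + x ^ q / p := by positivity
  have hyp : (0:ℝ) < 1 + y ^ q / p := by positivity
  have key : 1 + (x + y) ^ q / p ≤ (1 + x ^ q / p) * (1 + y ^ q / p) := by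
    have hd : (x + y) ^ q / p ≤ x ^ q / p + y ^ q / p := by
      rw [← add_div]; gcongr
    have : 0 ≤ (x ^ q / p) * (y ^ q / p) := by positivity
    nlinarith
  calc Real.log (1 + (x + y) ^ q / p)
      ≤ Real.log ((1 + x ^ q / p) * (1 + y ^ q / p)) :=
        Real.log_le_log (by positivity) key
    _ = _ := Real.log_mul hxp.ne' hyp.ne'
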